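/- Let σ be an involution of {1,…,n} and 1 ≤ i ≤ j ≤ n. Define the involution π_{i,j}(σ) of {1,…,n} by π_{i,j}(σ)(a) = σ(a) if both a and σ(a) lie in {i,…,j}, and π_{i,j}(σ)(a) = a otherwise. Then for all s, t with i ≤ s ≤ t ≤ j one has rank(π_{s,t}(N_σ)) = rank(π_{s,t}(N_{π_{i,j}(σ)})); in particular the principal submatrix π_{i,j}(R_σ) of the rank matrix R_σ coincides with the corresponding rank matrix of the involution π_{i,j}(σ), and hence is itself the rank matrix of an involution of a set of j−i+1 elements. Moreover π_{i,j}(N_σ) = π_{i,j}(N_{π_{i,j}(σ)}), and R_{π_{i,j}(σ)} ⪯ R_σ. -/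
import Mathlib


open Matrix

/-- A matrix is strictly upper-triangular. -/
def StrictUpper {n : ℕ} (x : Matrix (Fin n) (Fin n) ℂ) : Prop :=
  ∀ a b : Fin n, b ≤ a → x a b = 0

/-- A matrix is (weakly) upper-triangular. -/
def UpperTri {n : ℕ} (x : Matrix (Fin n) (Fin n) ℂ) : Prop :=
  ∀ a b : Fin n, b < a → x a b = 0

/-- The orbit of a matrix under conjugation by invertible upper-triangular matrices. -/
def Borbit {n : ℕ} (x : Matrix (Fin n) (Fin n) ℂ) : Set (Matrix (Fin n) (Fin n) ℂ) :=
  {y | ∃ b : Matrix (Fin n) (Fin n) ℂ, IsUnit b ∧ UpperTri b ∧ y = b * x * b⁻¹}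

/-- A permutation is an involution. -/
def IsInvol {n : ℕ} (σ : Equiv.Perm (Fin n)) : Prop := σ * σ = 1

/-- The strictly upper-triangular part `N_σ` of the permutation matrix of `σ`. -/
def Nmat {n : ℕ} (σ : Equiv.Perm (Fin n)) : Matrix (Fin n) (Fin n) ℂ :=
  Matrix.of fun a b => if a < b ∧ σ a = b then (1 : ℂ) else 0

/-- The submatrix `π_{i,j}(x)` on rows and columns `i,…,j` (1-based), for `1 ≤ i ≤ j ≤ n`. -/
def blk {n : ℕ} (x : Matrix (Fin n) (Fin n) ℂ) (i j : ℕ)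
    (h1 : 1 ≤ i) (h2 : i ≤ j) (h3 : j ≤ n) :
    Matrix (Fin (j + 1 - i)) (Fin (j + 1 - i)) ℂ :=
  Matrix.of fun a b =>
    x ⟨i - 1 + a.1, by have := a.2; omega⟩ ⟨i - 1 + b.1, by have := b.2; omega⟩

/-- The rank matrix of `N_σ` (1-based indices, 0 outside the range `1 ≤ i < j ≤ n`). -/
noncomputable def Rfun {n : ℕ} (σ : Equiv.Perm (Fin n)) : ℕ → ℕ → ℕ := fun i j =>
  if h : 1 ≤ i ∧ i < j ∧ j ≤ n then (blk (Nmat σ) i j h.1 h.2.1.le h.2.2).rank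
  else 0

/-- The number of two-cycles of an involution. -/
def numCycles {n : ℕ} (σ : Equiv.Perm (Fin n)) : ℕ :=
  (Finset.univ.filter fun a : Fin n => a < σ a).card

/-- Evaluation of a polynomial in the matrix entries at a matrix. -/
noncomputable def evalMat {n : ℕ} (x : Matrix (Fin n) (Fin n) ℂ)
    (f : MvPolynomial (Fin n × Fin n) ℂ) : ℂ :=
  MvPolynomial.eval (fun p => x p.1 p.2) f

/-- The vanishing ideal of a set of matrices. -/
noncomputable def vanishingIdeal {n : ℕ} (S : Set (Matrix (Fin n) (Fin n) ℂ)) :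
    Ideal (MvPolynomial (Fin n × Fin n) ℂ) where
  carrier := {f | ∀ x ∈ S, evalMat x f = 0}
  add_mem' := by
    intro a b ha hb x hx
    simp only [evalMat, map_add] at *
    rw [ha x hx, hb x hx, add_zero]
  zero_mem' := by
    intro x hx
    simp [evalMat]
  smul_mem' := by
    intro c f hf x hx
    simp only [evalMat, smul_eq_mul, _root_.map_mul] at *
    rw [hf x hx, mul_zero]

/-- The Zariski closure of a set of matrices: the common zero set of its vanishing ideal. -/
noncomputable def zclosure {n : ℕ} (S : Set (Matrix (Fin n) (Fin n) ℂ)) :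
    Set (Matrix (Fin n) (Fin n) ℂ) :=
  {x | ∀ f ∈ vanishingIdeal S, evalMat x f = 0}

/-- The space of upper-triangular matrices commuting with a given matrix
(the Lie algebra of the stabilizer of `N` in `B`). -/
noncomputable def commUT {n : ℕ} (N : Matrix (Fin n) (Fin n) ℂ) :
    Submodule ℂ (Matrix (Fin n) (Fin n) ℂ) where
  carrier := {z | UpperTri z ∧ z * N = N * z}
  add_mem' := by
    rintro a b ⟨ha1, ha2⟩ ⟨hb1, hb2⟩
    refine ⟨fun p q h => ?_, by rw [add_mul, mul_add, ha2, hb2]⟩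
    simp [Matrix.add_apply, ha1 p q h, hb1 p q h]
  zero_mem' := ⟨fun p q h => rfl, by simp⟩
  smul_mem' := by
    rintro c a ⟨ha1, ha2⟩
    refine ⟨fun p q h => ?_, by rw [Matrix.smul_mul, Matrix.mul_smul, ha2]⟩
    simp [Matrix.smul_apply, ha1 p q h]


/-- the restricted involution `π_{i,j}(σ)` has the same rank data as `σ`
inside the window `{i,…,j}`, the same submatrix `π_{i,j}(N)`, and `R_{π_{i,j}(σ)} ⪯ R_σ`. -/
theorem stmt8 (n : ℕ) (hn : 1 ≤ n) (σ τ : Equiv.Perm (Fin n)) (hσ : IsInvol σ)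
    (i j : ℕ) (hi : 1 ≤ i) (hij : i ≤ j) (hj : j ≤ n)
    (hτ1 : ∀ a : Fin n,
      (i ≤ (a : ℕ) + 1 ∧ (a : ℕ) + 1 ≤ j ∧ i ≤ ((σ a : Fin n) : ℕ) + 1 ∧
        ((σ a : Fin n) : ℕ) + 1 ≤ j) → τ a = σ a)
    (hτ2 : ∀ a : Fin n,
      ¬(i ≤ (a : ℕ) + 1 ∧ (a : ℕ) + 1 ≤ j ∧ i ≤ ((σ a : Fin n) : ℕ) + 1 ∧
        ((σ a : Fin n) : ℕ) + 1 ≤ j) → τ a = a) :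
    IsInvol τ ∧
    (∀ (s t : ℕ) (hs : i ≤ s) (hst : s ≤ t) (ht : t ≤ j),
      (blk (Nmat σ) s t (hi.trans hs) hst (ht.trans hj)).rank =
      (blk (Nmat τ) s t (hi.trans hs) hst (ht.trans hj)).rank) ∧
    blk (Nmat σ) i j hi hij hj = blk (Nmat τ) i j hi hij hj ∧
    (∀ s t, Rfun τ s t ≤ Rfun σ s t) := by
  have hσ' : ∀ a, σ (σ a) = a := by
    intro a
    have := Equiv.ext_iff.mp hσ a
    simpa using this
  -- τ is an involution
  have hτinv : IsInvol τ := by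
    refine Equiv.ext_iff.mpr fun a => ?_
    simp only [Equiv.Perm.mul_apply, Equiv.Perm.one_apply]
    by_cases h : i ≤ (a : ℕ) + 1 ∧ (a : ℕ) + 1 ≤ j ∧ i ≤ ((σ a : Fin n) : ℕ) + 1 ∧
        ((σ a : Fin n) : ℕ) + 1 ≤ j
    · rw [hτ1 a h, hτ1 (σ a) ⟨h.2.2.1, h.2.2.2, by rw [hσ' a]; exact h.1,
        by rw [hσ' a]; exact h.2.1⟩, hσ' a]
    · rw [hτ2 a h, hτ2 a h]
  -- entrywise agreement inside the window
  have key : ∀ p q : Fin n, i ≤ (p : ℕ) + 1 → (p : ℕ) + 1 ≤ j → i ≤ (q : ℕ) + 1 →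
      (q : ℕ) + 1 ≤ j → Nmat σ p q = Nmat τ p q := by
    intro p q hp1 hp2 hq1 hq2
    unfold Nmat
    simp only [Matrix.of_apply]
    by_cases hpq : p < q
    · by_cases hs : σ p = q
      · have hτp : τ p = q := by
          rw [hτ1 p ⟨hp1, hp2, by rw [hs]; exact hq1, by rw [hs]; exact hq2⟩]; exact hs
        rw [if_pos ⟨hpq, hs⟩, if_pos ⟨hpq, hτp⟩]
      · have hτp : τ p ≠ q := by
          intro ht
          by_cases hc : i ≤ (p : ℕ) + 1 ∧ (p : ℕ) + 1 ≤ j ∧ i ≤ ((σ p : Fin n) : ℕ) + 1 ∧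
              ((σ p : Fin n) : ℕ) + 1 ≤ j
          · exact hs (by rw [← hτ1 p hc]; exact ht)
          · exact absurd (hτ2 p hc ▸ ht) (ne_of_lt hpq)
        rw [if_neg (fun h : p < q ∧ σ p = q => hs h.2),
          if_neg (fun h : p < q ∧ τ p = q => hτp h.2)]
    · rw [if_neg (fun h => hpq h.1), if_neg (fun h => hpq h.1)]
  -- block equality inside the window
  have hblk : ∀ (s t : ℕ) (hs : i ≤ s) (hst : s ≤ t) (ht : t ≤ j),
      blk (Nmat σ) s t (hi.trans hs) hst (ht.trans hj) =
      blk (Nmat τ) s t (hi.trans hs) hst (ht.trans hj) := by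
    intro s t hs hst ht
    ext a b
    unfold blk
    simp only [Matrix.of_apply]
    have ha := a.2
    have hb := b.2
    apply key <;> simp <;> omega
  refine ⟨hτinv, fun s t hs hst ht => by rw [hblk s t hs hst ht], hblk i j le_rfl hij le_rfl, ?_⟩
  -- the diagonal cut-off identity
  have d : Fin n → ℂ := fun p => if i ≤ (p : ℕ) + 1 ∧ (p : ℕ) + 1 ≤ j then 1 else 0
  have hcut : ∀ p q : Fin n, Nmat τ p q =
      (if i ≤ (p : ℕ) + 1 ∧ (p : ℕ) + 1 ≤ j then (1 : ℂ) else 0) * Nmat σ p q *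
      (if i ≤ (q : ℕ) + 1 ∧ (q : ℕ) + 1 ≤ j then (1 : ℂ) else 0) := by
    intro p q
    unfold Nmat
    simp only [Matrix.of_apply]
    by_cases h : p < q ∧ τ p = q
    · rw [if_pos h]
      have hne : τ p ≠ p := by rw [h.2]; exact (ne_of_lt h.1).symm
      by_cases hc : i ≤ (p : ℕ) + 1 ∧ (p : ℕ) + 1 ≤ j ∧ i ≤ ((σ p : Fin n) : ℕ) + 1 ∧
          ((σ p : Fin n) : ℕ) + 1 ≤ j
      · have hsp : σ p = q := by rw [← hτ1 p hc]; exact h.2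
        rw [if_pos ⟨hc.1, hc.2.1⟩, if_pos ⟨h.1, hsp⟩,
          if_pos ⟨by rw [← hsp]; exact hc.2.2.1, by rw [← hsp]; exact hc.2.2.2⟩]
        ring
      · exact absurd (hτ2 p hc) hne
    · rw [if_neg h]
      by_cases hp : i ≤ (p : ℕ) + 1 ∧ (p : ℕ) + 1 ≤ j
      · by_cases hq : i ≤ (q : ℕ) + 1 ∧ (q : ℕ) + 1 ≤ j
        · by_cases hsq : p < q ∧ σ p = q
          · exfalso
            apply h
            refine ⟨hsq.1, ?_⟩
            rw [hτ1 p ⟨hp.1, hp.2, by rw [hsq.2]; exact hq.1, by rw [hsq.2]; exact hq.2⟩]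
            exact hsq.2
          · rw [if_neg hsq]; ring
        · rw [if_neg hq]; ring
      · rw [if_neg hp]; ring
  -- monotonicity of rank matrices
  intro s t
  unfold Rfun
  by_cases hc : 1 ≤ s ∧ s < t ∧ t ≤ n
  · rw [dif_pos hc, dif_pos hc]
    set M := blk (Nmat σ) s t hc.1 hc.2.1.le hc.2.2 with hM
    have hd : blk (Nmat τ) s t hc.1 hc.2.1.le hc.2.2 =
        Matrix.diagonal (fun a : Fin (t + 1 - s) =>
          if i ≤ (s - 1 + (a : ℕ)) + 1 ∧ (s - 1 + (a : ℕ)) + 1 ≤ j then (1 : ℂ) else 0) * M *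
        Matrix.diagonal (fun a : Fin (t + 1 - s) =>
          if i ≤ (s - 1 + (a : ℕ)) + 1 ∧ (s - 1 + (a : ℕ)) + 1 ≤ j then (1 : ℂ) else 0) := by
      ext a b
      rw [Matrix.mul_diagonal, Matrix.diagonal_mul, hM]
      exact hcut _ _
    rw [hd]
    calc (Matrix.diagonal _ * M * Matrix.diagonal _).rank
        ≤ (Matrix.diagonal _ * M).rank := Matrix.rank_mul_le_left _ _
      _ ≤ M.rank := Matrix.rank_mul_le_right _ _
  · rw [dif_neg hc]
    exact Nat.zero_le _
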